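/- Let n = 2^r for some positive integer r. Then there exists a finite sequence of pairs of distinct indices in {1,…,n} (depending only on n, not on the initial vector) such that for every x_0 ∈ ℝ^n, applying the corresponding pair-averaging operations in order to x_0 yields the constant vector whose every coordinate equals (1/n) ∑_{i=1}^n x_{0,i}. -/

import Mathlib

open MeasureTheory Finset Filter
open scoped ENNReal NNReal

/-- The set of unordered pairs of distinct indices in `Fin n`, encoded as
2-element subsets of `Fin n`. -/
abbrev Pairs (n : ℕ) : Type := {s : Finset (Fin n) // s.card = 2}

instance (n : ℕ) : MeasurableSpace (Pairs n) := ⊤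

/-- The uniform probability measure on the set of pairs. -/
noncomputable def uniformPair (n : ℕ) : Measure (Pairs n) :=
  (Fintype.card (Pairs n) : ℝ≥0∞)⁻¹ • Measure.count

/-- `μ` is the infinite product over `ℕ` of the uniform measure on pairs:
its finite-dimensional marginals are the finite uniform product measures.
(This characterizes the infinite product measure uniquely.) -/
def IsProductLaw (n : ℕ) (μ : Measure (ℕ → Pairs n)) : Prop :=
  ∀ K : ℕ, μ.map (fun ω (i : Fin K) => ω i) = Measure.pi fun _ : Fin K => uniformPair n

/-- The pair-averaging operation: both coordinates in `s` (a 2-element set `{i,j}`)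
are replaced by `(x i + x j)/2`; the other coordinates are unchanged. -/
noncomputable def avgStep {n : ℕ} (s : Finset (Fin n)) (x : Fin n → ℝ) : Fin n → ℝ :=
  fun l => if l ∈ s then (∑ m ∈ s, x m) / 2 else x l

/-- The repeated averaging chain started at `x0`, driven by the pair sequence `ω`. -/
noncomputable def chain {n : ℕ} (x0 : Fin n → ℝ) (ω : ℕ → Pairs n) : ℕ → Fin n → ℝ
  | 0 => x0
  | k + 1 => avgStep (ω k).1 (chain x0 ω k)

/-- `T(k) = ∑_i |x_{k,i} - 1/n|`. -/
noncomputable def Tdist {n : ℕ} (x0 : Fin n → ℝ) (ω : ℕ → Pairs n) (k : ℕ) : ℝ :=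
  ∑ i, |chain x0 ω k i - 1 / n|

/-- The initial vector `(1,0,…,0)`. -/
def e1 (n : ℕ) : Fin n → ℝ := fun i => if i.val = 0 then 1 else 0

/-- The standard normal cumulative distribution function. -/
noncomputable def stdGaussianCDF (x : ℝ) : ℝ :=
  ∫ t in Set.Iic x, (2 * Real.pi) ^ (-(1:ℝ)/2) * Real.exp (-t ^ 2 / 2)

noncomputable def applyL {n : ℕ} (L : List (Finset (Fin n))) (x : Fin n → ℝ) : Fin n → ℝ :=
  L.foldl (fun y s => avgStep s y) x

lemma applyL_nil {n : ℕ} (x : Fin n → ℝ) : applyL [] x = x := rfl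

lemma applyL_cons {n : ℕ} (s : Finset (Fin n)) (L : List (Finset (Fin n))) (x : Fin n → ℝ) :
    applyL (s :: L) x = applyL L (avgStep s x) := rfl

lemma applyL_append {n : ℕ} (L1 L2 : List (Finset (Fin n))) (x : Fin n → ℝ) :
    applyL (L1 ++ L2) x = applyL L2 (applyL L1 x) := List.foldl_append ..

lemma avgStep_not_mem {n : ℕ} {s : Finset (Fin n)} (x : Fin n → ℝ) {l : Fin n}
    (hl : l ∉ s) : avgStep s x l = x l := if_neg hl

lemma avgStep_map {m n : ℕ} (f : Fin m ↪ Fin n) (s : Finset (Fin m)) (x : Fin n → ℝ) :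
    (avgStep (s.map f) x ∘ f = avgStep s (x ∘ f)) ∧
    (∀ l : Fin n, l ∉ Set.range f → avgStep (s.map f) x l = x l) := by
  constructor
  · funext i
    simp only [Function.comp_apply, avgStep, Finset.mem_map_equiv]
    rw [Finset.sum_map]
    simp only [Finset.mem_map, Function.comp_apply]
    by_cases hi : i ∈ s
    · rw [if_pos ⟨i, hi, rfl⟩, if_pos hi]
    · rw [if_neg, if_neg hi]
      rintro ⟨j, hj, hji⟩
      exact hi (f.injective hji ▸ hj)
  · intro l hl
    apply avgStep_not_mem
    simp only [Finset.mem_map]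
    rintro ⟨j, _, rfl⟩
    exact hl ⟨j, rfl⟩

lemma applyL_map {m n : ℕ} (f : Fin m ↪ Fin n) (L : List (Finset (Fin m))) (x : Fin n → ℝ) :
    (applyL (L.map (fun s => s.map f)) x ∘ f = applyL L (x ∘ f)) ∧
    (∀ l : Fin n, l ∉ Set.range f → applyL (L.map (fun s => s.map f)) x l = x l) := by
  induction L generalizing x with
  | nil => exact ⟨rfl, fun _ _ => rfl⟩
  | cons s L ih =>
    simp only [List.map_cons, applyL_cons]
    obtain ⟨h1, h2⟩ := avgStep_map f s x
    obtain ⟨ih1, ih2⟩ := ih (avgStep (s.map f) x)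
    exact ⟨by rw [ih1, h1], fun l hl => by rw [ih2 l hl, h2 l hl]⟩

/-- the pair {castAdd i, natAdd i} -/
def crossPair (m : ℕ) (i : Fin m) : Finset (Fin (m + m)) :=
  {Fin.castAdd m i, Fin.natAdd m i}

lemma castAdd_ne_natAdd {m : ℕ} (i j : Fin m) : Fin.castAdd m i ≠ Fin.natAdd m j := by
  intro h
  have := congrArg Fin.val h
  simp only [Fin.coe_castAdd, Fin.coe_natAdd] at this
  omega

lemma crossPair_card (m : ℕ) (i : Fin m) : (crossPair m i).card = 2 := by
  rw [crossPair, Finset.card_insert_of_notMem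
    (fun h => castAdd_ne_natAdd i i (Finset.mem_singleton.mp h)), Finset.card_singleton]

lemma mem_crossPair {m : ℕ} {i : Fin m} {l : Fin (m + m)} :
    l ∈ crossPair m i ↔ l = Fin.castAdd m i ∨ l = Fin.natAdd m i := by
  rw [crossPair, Finset.mem_insert, Finset.mem_singleton]

lemma final_round (m : ℕ) (A B : ℝ) (J : List (Fin m)) (hJ : J.Nodup) :
    ∀ (x : Fin (m + m) → ℝ),
    (∀ i ∈ J, x (Fin.castAdd m i) = A) → (∀ i ∈ J, x (Fin.natAdd m i) = B) →
    ∀ l, applyL (J.map (crossPair m)) x l =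
      if ∃ i ∈ J, l = Fin.castAdd m i ∨ l = Fin.natAdd m i then (A + B) / 2 else x l := by
  induction J with
  | nil => intro x _ _ l; simp [applyL_nil]
  | cons i0 J ih =>
    intro x hA hB l
    obtain ⟨hi0J, hJ'⟩ := List.nodup_cons.mp hJ
    simp only [List.map_cons, applyL_cons]
    set x' := avgStep (crossPair m i0) x with hx'
    have hsum : ∑ v ∈ crossPair m i0, x v = A + B := by
      rw [crossPair, Finset.sum_pair (castAdd_ne_natAdd i0 i0),
        hA i0 (List.mem_cons_self), hB i0 (List.mem_cons_self)]
    have hx'in : ∀ l ∈ crossPair m i0, x' l = (A + B) / 2 := by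
      intro l hl
      rw [hx', avgStep, if_pos hl, hsum]
    have hx'out : ∀ l, l ∉ crossPair m i0 → x' l = x l := fun l hl => avgStep_not_mem x hl
    have hA' : ∀ i ∈ J, x' (Fin.castAdd m i) = A := by
      intro i hi
      rw [hx'out, hA i (List.mem_cons_of_mem _ hi)]
      rw [mem_crossPair]
      rintro (h | h)
      · exact hi0J ((Fin.castAdd_injective m m).eq_iff.mp h ▸ hi)
      · exact castAdd_ne_natAdd i i0 h
    have hB' : ∀ i ∈ J, x' (Fin.natAdd m i) = B := by
      intro i hi
      rw [hx'out, hB i (List.mem_cons_of_mem _ hi)]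
      rw [mem_crossPair]
      rintro (h | h)
      · exact castAdd_ne_natAdd i0 i h.symm
      · have hv := congrArg Fin.val h
        simp only [Fin.coe_natAdd] at hv
        exact hi0J ((Fin.ext (Nat.add_left_cancel hv) : i = i0) ▸ hi)
    rw [ih hJ' x' hA' hB' l]
    by_cases h1 : ∃ i ∈ J, l = Fin.castAdd m i ∨ l = Fin.natAdd m i
    · rw [if_pos h1, if_pos]
      obtain ⟨i, hi, h⟩ := h1
      exact ⟨i, List.mem_cons_of_mem _ hi, h⟩
    · rw [if_neg h1]
      by_cases h2 : l ∈ crossPair m i0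
      · rw [hx'in l h2, if_pos ⟨i0, List.mem_cons_self, mem_crossPair.mp h2⟩]
      · rw [hx'out l h2, if_neg]
        rintro ⟨i, hi, h⟩
        rcases List.mem_cons.mp hi with rfl | hi'
        · exact h2 (mem_crossPair.mpr h)
        · exact h1 ⟨i, hi', h⟩

/-- `Good n`: there is a fixed list of 2-element subsets averaging every vector. -/
def Good (n : ℕ) : Prop :=
  ∃ L : List (Finset (Fin n)), (∀ s ∈ L, s.card = 2) ∧
    ∀ x : Fin n → ℝ, applyL L x = fun _ => (∑ i, x i) / n

lemma good_two : Good 2 := by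
  refine ⟨[Finset.univ], ?_, ?_⟩
  · intro s hs; simp at hs; subst hs; rfl
  · intro x
    funext l
    rw [applyL_cons, applyL_nil, avgStep, if_pos (Finset.mem_univ l)]
    norm_num

lemma good_double {m : ℕ} (hm : 0 < m) (h : Good m) : Good (m + m) := by
  obtain ⟨L0, hL0card, hL0⟩ := h
  refine ⟨L0.map (fun s => s.map (Fin.castAddEmb m)) ++
      L0.map (fun s => s.map (Fin.natAddEmb m)) ++
      (List.finRange m).map (crossPair m), ?_, ?_⟩
  · intro s hs
    simp only [List.mem_append, List.mem_map] at hs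
    rcases hs with (⟨t, ht, rfl⟩ | ⟨t, ht, rfl⟩) | ⟨i, _, rfl⟩
    · rw [Finset.card_map]; exact hL0card t ht
    · rw [Finset.card_map]; exact hL0card t ht
    · exact crossPair_card m i
  · intro x
    funext l
    rw [applyL_append, applyL_append]
    set x1 := applyL (L0.map (fun s => s.map (Fin.castAddEmb m))) x with hx1
    set x2 := applyL (L0.map (fun s => s.map (Fin.natAddEmb m))) x1 with hx2
    set A := (∑ i, x (Fin.castAdd m i)) / m with hA
    set B := (∑ i, x (Fin.natAdd m i)) / m with hB
    have hx1cast : ∀ i, x1 (Fin.castAdd m i) = A := by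
      intro i
      have := congrFun (applyL_map (Fin.castAddEmb m) L0 x).1 i
      simp only [Function.comp_apply] at this
      rw [hx1]
      rw [show ((Fin.castAddEmb m) i) = Fin.castAdd m i from rfl] at this
      rw [this, hL0 (x ∘ Fin.castAddEmb m)]
      rfl
    have hx1nat : ∀ i, x1 (Fin.natAdd m i) = x (Fin.natAdd m i) := by
      intro i
      apply (applyL_map (Fin.castAddEmb m) L0 x).2
      rintro ⟨j, hj⟩
      exact castAdd_ne_natAdd j i hj
    have hx2nat : ∀ i, x2 (Fin.natAdd m i) = B := by
      intro i
      have := congrFun (applyL_map (Fin.natAddEmb m) L0 x1).1 i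
      simp only [Function.comp_apply] at this
      rw [hx2]
      rw [show ((Fin.natAddEmb m) i) = Fin.natAdd m i from rfl] at this
      rw [this, hL0 (x1 ∘ Fin.natAddEmb m)]
      simp only
      rw [hB]
      congr 1
      exact Finset.sum_congr rfl fun j _ => hx1nat j
    have hx2cast : ∀ i, x2 (Fin.castAdd m i) = A := by
      intro i
      rw [hx2]
      rw [(applyL_map (Fin.natAddEmb m) L0 x1).2 _ ?_]
      · exact hx1cast i
      · rintro ⟨j, hj⟩
        exact castAdd_ne_natAdd i j hj.symm
    rw [final_round m A B (List.finRange m) (List.nodup_finRange m) x2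
      (fun i _ => hx2cast i) (fun i _ => hx2nat i) l]
    rw [if_pos]
    · rw [hA, hB, Fin.sum_univ_add (f := x),
        show ((m + m : ℕ) : ℝ) = (m : ℝ) * 2 by push_cast; ring,
        ← add_div, div_div]
    · have hl := l.isLt
      by_cases h : l.val < m
      · refine ⟨⟨l.val, h⟩, List.mem_finRange _, Or.inl (Fin.ext ?_)⟩
        simp [Fin.coe_castAdd]
      · refine ⟨⟨l.val - m, by omega⟩, List.mem_finRange _, Or.inr (Fin.ext ?_)⟩
        simp only [Fin.coe_natAdd]
        omega


lemma good_congr {a b : ℕ} (h : a = b) (ha : Good a) : Good b := h ▸ ha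

lemma good_pow (r : ℕ) (hr : 1 ≤ r) : Good (2 ^ r) := by
  induction r with
  | zero => omega
  | succ r ih =>
    rcases Nat.eq_or_lt_of_le hr with h | h
    · exact good_congr (by rw [← h]; norm_num) good_two
    · have hr' : 1 ≤ r := by omega
      have hpos : 0 < 2 ^ r := Nat.pow_pos (n := r) (by norm_num)
      exact good_congr (by rw [pow_succ, mul_two]) (good_double hpos (ih hr'))

lemma chain_eq_applyL {n : ℕ} (x0 : Fin n → ℝ) (ω : ℕ → Pairs n) :
    ∀ K, chain x0 ω K = applyL ((List.range K).map (fun k => (ω k).1)) x0 := by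
  intro K
  induction K with
  | zero => rfl
  | succ K ih =>
    show avgStep (ω K).1 (chain x0 ω K) = _
    rw [ih, List.range_succ, List.map_append, applyL_append]
    rfl

/-- **Finite termination scheme for powers of 2.** If `n = 2^r` (`r ≥ 1`), there is a
finite sequence of pairs, depending only on `n`, such that applying the corresponding
pair-averaging operations to any `x₀ ∈ ℝⁿ` yields the constant vector with all
coordinates equal to `(1/n) ∑ᵢ x₀ᵢ`. -/
theorem termination_scheme_pow_two (n r : ℕ) (hr : 1 ≤ r) (hn : n = 2 ^ r) :
    ∃ (K : ℕ) (ω : ℕ → Pairs n), ∀ x0 : Fin n → ℝ,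
      chain x0 ω K = fun _ => (∑ i, x0 i) / n := by
  obtain ⟨L, hLcard, hL⟩ := good_pow r hr
  subst hn
  have hn2 : 1 < 2 ^ r := by
    have : 2 ^ 1 ≤ 2 ^ r := Nat.pow_le_pow_right (by norm_num) hr
    omega
  have hdef : Pairs (2 ^ r) := ⟨{⟨0, lt_trans Nat.zero_lt_one hn2⟩, ⟨1, hn2⟩}, by
    rw [Finset.card_insert_of_notMem (by simp [Fin.ext_iff]), Finset.card_singleton]⟩
  refine ⟨L.length, fun k =>
    if h : k < L.length then ⟨L[k], hLcard _ (List.getElem_mem h)⟩ else hdef, fun x0 => ?_⟩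
  rw [chain_eq_applyL]
  have hlist : (List.range L.length).map
      (fun k => ((if h : k < L.length then
        (⟨L[k], hLcard _ (List.getElem_mem h)⟩ : Pairs (2 ^ r)) else hdef) : Pairs (2 ^ r)).1)
      = L := by
    apply List.ext_getElem
    · simp
    · intro k h1 h2
      simp only [List.getElem_map, List.getElem_range]
      rw [dif_pos h2]
  rw [hlist, hL]
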